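/- For all natural numbers m ≥ 2 and n with n > 4m² − 6m and m ∣ n, every tournament on n vertices admits an m-star-factor. -/

import Mathlib

/-- A tournament on Fin n: the relation is asymmetric and total on distinct pairs. -/
def IsTournament {n : ℕ} (r : Fin n → Fin n → Prop) : Prop :=
  (∀ u v : Fin n, r u v → ¬ r v u) ∧ (∀ u v : Fin n, u ≠ v → r u v ∨ r v u)

/-- An m-star: an m-element vertex set with a center dominating all other members. -/
def IsMStar {n : ℕ} (r : Fin n → Fin n → Prop) (m : ℕ) (S : Finset (Fin n)) : Prop :=
  S.card = m ∧ ∃ c ∈ S, ∀ v ∈ S, v ≠ c → r c v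

/-- An m-star-factor: a partition of the vertex set into pairwise disjoint m-stars. -/
def HasStarFactor {n : ℕ} (r : Fin n → Fin n → Prop) (m : ℕ) : Prop :=
  ∃ P : Finset (Finset (Fin n)), (∀ S ∈ P, IsMStar r m S) ∧
    (P : Set (Finset (Fin n))).PairwiseDisjoint id ∧ P.biUnion id = Finset.univ

set_option linter.unusedSectionVars false
set_option maxHeartbeats 1000000

section Aux
variable {N : ℕ} {r : Fin N → Fin N → Prop} [DecidableRel r] {m : ℕ}

lemma not_self (hr : IsTournament r) (a : Fin N) : ¬ r a a := fun h => hr.1 a a h h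

lemma sum_outdeg (hr : IsTournament r) (S : Finset (Fin N)) :
    ∑ v ∈ S, (S.filter (fun u => r v u)).card = S.card.choose 2 := by
  classical
  induction S using Finset.induction_on with
  | empty => simp
  | @insert a S ha ih =>
    rw [Finset.sum_insert ha]
    have h1 : ((insert a S).filter (fun u => r a u)).card = (S.filter (fun u => r a u)).card := by
      rw [Finset.filter_insert, if_neg (not_self hr a)]
    have h2 : ∀ v ∈ S, ((insert a S).filter (fun u => r v u)).card
        = (S.filter (fun u => r v u)).card + (if r v a then 1 else 0) := by
      intro v hv
      rw [Finset.filter_insert]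
      split
      · rw [Finset.card_insert_of_notMem (by simp [ha])]
      · simp
    rw [h1, Finset.sum_congr rfl h2, Finset.sum_add_distrib]
    have h3 : (S.filter (fun u => r a u)).card = ∑ v ∈ S, (if r a v then 1 else 0) := by
      rw [Finset.card_filter]
    have h4 : (S.filter (fun u => r a u)).card + ∑ v ∈ S, (if r v a then 1 else 0) = S.card := by
      rw [h3, ← Finset.sum_add_distrib]
      rw [Finset.card_eq_sum_ones]
      apply Finset.sum_congr rfl
      intro v hv
      have hne : a ≠ v := fun h => ha (h ▸ hv)
      rcases hr.2 a v hne with h | h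
      · rw [if_pos h, if_neg (hr.1 a v h)]
      · rw [if_neg (hr.1 v a h), if_pos h]
    have h5 : (insert a S).card = S.card + 1 := Finset.card_insert_of_notMem ha
    have h6 : (S.card+1).choose 2 = S.card + S.card.choose 2 := by
      simpa using Nat.choose_succ_succ' S.card 1
    rw [h5, h6]
    omega

lemma maxdeg (hr : IsTournament r) {S : Finset (Fin N)} (hne : S.Nonempty) {d : ℕ}
    (hd : 2 * d ≤ S.card) : ∃ c ∈ S, d ≤ (S.filter (fun u => r c u)).card := by
  by_contra hcon
  push_neg at hcon
  have hsum : ∑ v ∈ S, (S.filter (fun u => r v u)).card ≤ S.card * (d - 1) := by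
    calc ∑ v ∈ S, (S.filter (fun u => r v u)).card ≤ ∑ v ∈ S, (d-1) := by
          apply Finset.sum_le_sum
          intro v hv
          have := hcon v hv
          omega
      _ = S.card * (d-1) := by rw [Finset.sum_const, smul_eq_mul]
  rw [sum_outdeg hr S] at hsum
  have hch : S.card.choose 2 = S.card * (S.card - 1) / 2 := Nat.choose_two_right S.card
  have hd1 : 1 ≤ d := by
    rcases Nat.eq_zero_or_pos d with h | h
    · obtain ⟨c, hc⟩ := hne
      exact absurd (hcon c hc) (by omega)
    · exact h
  have hk : 1 ≤ S.card := Finset.card_pos.mpr hne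
  -- S.card * (S.card - 1) / 2 ≤ S.card * (d-1)  with S.card ≥ 2d ⇒ contradiction
  have h2 : S.card * (S.card - 1) ≤ 2 * (S.card * (d - 1)) := by
    rw [hch] at hsum
    have := Nat.div_mul_le_self (S.card * (S.card - 1)) 2
    have h3 : S.card * (S.card - 1) / 2 * 2 = S.card * (S.card - 1) := by
      apply Nat.div_mul_cancel
      rcases Nat.even_or_odd S.card with he | ho
      · exact Dvd.dvd.mul_right he.two_dvd _
      · exact Dvd.dvd.mul_left (Nat.Odd.sub_odd ho odd_one).two_dvd _
    omega
  have h4 : S.card - 1 ≤ 2 * (d-1) := by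
    have := Nat.le_of_mul_le_mul_left (by linarith [h2] : S.card * (S.card - 1) ≤ S.card * (2 * (d-1))) (by omega : 0 < S.card)
    omega
  omega

/-- A family of disjoint m-stars covering exactly U. -/
def GoodOn (r : Fin N → Fin N → Prop) (m : ℕ) (P : Finset (Finset (Fin N)))
    (U : Finset (Fin N)) : Prop :=
  (∀ S ∈ P, IsMStar r m S) ∧ (P : Set (Finset (Fin N))).PairwiseDisjoint id ∧
    P.biUnion id = U

lemma goodOn_empty : GoodOn r m (∅ : Finset (Finset (Fin N))) ∅ := by
  refine ⟨by simp, by simp, by simp⟩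

lemma goodOn_singleton {S : Finset (Fin N)} (hS : IsMStar r m S) : GoodOn r m {S} S := by
  refine ⟨by simpa using hS, by rw [Finset.coe_singleton]; exact Set.pairwiseDisjoint_singleton _ _, by simp⟩

lemma GoodOn.union {P Q : Finset (Finset (Fin N))} {U W : Finset (Fin N)}
    (hP : GoodOn r m P U) (hQ : GoodOn r m Q W) (hUW : Disjoint U W) :
    GoodOn r m (P ∪ Q) (U ∪ W) := by
  obtain ⟨hP1, hP2, hP3⟩ := hP
  obtain ⟨hQ1, hQ2, hQ3⟩ := hQ
  refine ⟨?_, ?_, ?_⟩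
  · intro S hS
    rcases Finset.mem_union.mp hS with h | h
    · exact hP1 S h
    · exact hQ1 S h
  · intro S hS T hT hne
    simp only [Finset.coe_union, Set.mem_union, Finset.mem_coe] at hS hT
    rcases hS with hS | hS <;> rcases hT with hT | hT
    · exact hP2 hS hT hne
    · exact Disjoint.mono (hP3 ▸ Finset.subset_biUnion_of_mem id hS)
        (hQ3 ▸ Finset.subset_biUnion_of_mem id hT) hUW
    · exact (Disjoint.mono (hP3 ▸ Finset.subset_biUnion_of_mem id hT)
        (hQ3 ▸ Finset.subset_biUnion_of_mem id hS) hUW).symm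
    · exact hQ2 hS hT hne
  · rw [← hP3, ← hQ3]
    ext x
    simp only [Finset.mem_biUnion, Finset.mem_union, id]
    constructor
    · rintro ⟨S, hS | hS, hx⟩
      · exact Or.inl ⟨S, hS, hx⟩
      · exact Or.inr ⟨S, hS, hx⟩
    · rintro (⟨S, hS, hx⟩ | ⟨S, hS, hx⟩)
      · exact ⟨S, Or.inl hS, hx⟩
      · exact ⟨S, Or.inr hS, hx⟩

lemma GoodOn.congr {P : Finset (Finset (Fin N))} {U W : Finset (Fin N)}
    (hP : GoodOn r m P U) (h : U = W) : GoodOn r m P W := h ▸ hP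

/-- Greedy extraction: from a set of size (m-1) + k*m extract k disjoint stars,
leaving m-1 uncovered vertices. -/
lemma greedy (hr : IsTournament r) (hm : 2 ≤ m) :
    ∀ (k : ℕ) (B : Finset (Fin N)), B.card = (m - 1) + k * m →
    ∃ P B', B' ⊆ B ∧ B'.card = m - 1 ∧ GoodOn r m P (B \ B') := by
  intro k
  induction k with
  | zero =>
    intro B hB
    exact ⟨∅, B, Finset.Subset.refl B, by omega, by rw [Finset.sdiff_self]; exact goodOn_empty⟩
  | succ k ih =>
    intro B hB
    have hne : B.Nonempty := Finset.card_pos.mp (by omega)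
    have hd : 2 * (m - 1) ≤ B.card := by
      have : (k+1) * m = k * m + m := by ring
      omega
    obtain ⟨c, hcB, hcd⟩ := maxdeg hr hne hd
    obtain ⟨L, hLsub, hLcard⟩ := Finset.exists_subset_card_eq hcd
    have hLB : L ⊆ B := hLsub.trans (Finset.filter_subset _ _)
    have hcL : c ∉ L := fun h => not_self hr c (Finset.mem_filter.mp (hLsub h)).2
    set S : Finset (Fin N) := insert c L with hSdef
    have hScard : S.card = m := by
      rw [Finset.card_insert_of_notMem hcL, hLcard]; omega
    have hSstar : IsMStar r m S := by
      refine ⟨hScard, c, Finset.mem_insert_self c L, ?_⟩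
      intro v hv hvc
      rcases Finset.mem_insert.mp hv with h | h
      · exact absurd h hvc
      · exact (Finset.mem_filter.mp (hLsub h)).2
    have hSB : S ⊆ B := Finset.insert_subset hcB hLB
    have hB2card : (B \ S).card = (m - 1) + k * m := by
      rw [Finset.card_sdiff_of_subset hSB, hScard, hB]
      have : (k+1) * m = k * m + m := by ring
      omega
    obtain ⟨P', B', hB'sub, hB'card, hgood⟩ := ih (B \ S) hB2card
    refine ⟨{S} ∪ P', B', hB'sub.trans (Finset.sdiff_subset), hB'card, ?_⟩
    have hdisj : Disjoint S ((B \ S) \ B') := by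
      exact Disjoint.mono_right (Finset.sdiff_subset) (Finset.disjoint_sdiff)
    have := (goodOn_singleton hSstar).union hgood hdisj
    apply this.congr
    ext x
    simp only [Finset.mem_union, Finset.mem_sdiff]
    have h1 : x ∈ S → x ∈ B := fun h => hSB h
    have h2 : x ∈ B' → x ∈ B \ S := fun h => hB'sub h
    simp only [Finset.mem_sdiff] at h2
    tauto

/-- Absorbing one straggler x into a star whose other m-1 vertices lie in A'. -/
lemma straggler (hr : IsTournament r) (hm : 2 ≤ m) {x : Fin N} {A' : Finset (Fin N)}
    (hx : x ∉ A') (hA : 3 * m ≤ A'.card + 5) :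
    ∃ S, IsMStar r m S ∧ x ∈ S ∧ S ⊆ insert x A' := by
  by_cases h1 : m - 1 ≤ (A'.filter (fun u => r x u)).card
  · obtain ⟨L, hLsub, hLcard⟩ := Finset.exists_subset_card_eq h1
    have hLA : L ⊆ A' := hLsub.trans (Finset.filter_subset _ _)
    have hxL : x ∉ L := fun h => hx (hLA h)
    refine ⟨insert x L, ⟨?_, x, Finset.mem_insert_self _ _, ?_⟩, Finset.mem_insert_self _ _, ?_⟩
    · rw [Finset.card_insert_of_notMem hxL, hLcard]; omega
    · intro v hv hvx
      rcases Finset.mem_insert.mp hv with h | h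
      · exact absurd h hvx
      · exact (Finset.mem_filter.mp (hLsub h)).2
    · exact Finset.insert_subset_insert _ hLA
  · -- D = in-neighbors of x within A'
    set D : Finset (Fin N) := A'.filter (fun a => r a x) with hD
    have hsplit : A'.card ≤ (A'.filter (fun u => r x u)).card + D.card := by
      have hsub : A' ⊆ (A'.filter (fun u => r x u)) ∪ D := by
        intro a ha
        have hax : x ≠ a := fun h => hx (h ▸ ha)
        rcases hr.2 x a hax with h | h
        · exact Finset.mem_union_left _ (Finset.mem_filter.mpr ⟨ha, h⟩)
        · exact Finset.mem_union_right _ (Finset.mem_filter.mpr ⟨ha, h⟩)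
      exact le_trans (Finset.card_le_card hsub) (Finset.card_union_le _ _)
    have hDcard : 2 * (m - 2) + 1 ≤ D.card := by omega
    have hDne : D.Nonempty := Finset.card_pos.mp (by omega)
    obtain ⟨c, hcD, hcd⟩ := maxdeg hr hDne (d := m - 2) (by omega)
    obtain ⟨L, hLsub, hLcard⟩ := Finset.exists_subset_card_eq hcd
    have hLD : L ⊆ D := hLsub.trans (Finset.filter_subset _ _)
    have hLA : L ⊆ A' := hLD.trans (Finset.filter_subset _ _)
    have hcA : c ∈ A' := (Finset.filter_subset _ _) hcD
    have hcx : c ≠ x := fun h => hx (h ▸ hcA)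
    have hxL : x ∉ L := fun h => hx (hLA h)
    have hcL : c ∉ L := fun h => not_self hr c (Finset.mem_filter.mp (hLsub h)).2
    refine ⟨insert c (insert x L), ⟨?_, c, Finset.mem_insert_self _ _, ?_⟩,
      Finset.mem_insert_of_mem (Finset.mem_insert_self _ _), ?_⟩
    · rw [Finset.card_insert_of_notMem (by simp [hcx, hcL]),
        Finset.card_insert_of_notMem hxL, hLcard]
      omega
    · intro v hv hvc
      rcases Finset.mem_insert.mp hv with h | h
      · exact absurd h hvc
      · rcases Finset.mem_insert.mp h with h' | h'
        · subst h'; exact (Finset.mem_filter.mp hcD).2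
        · exact (Finset.mem_filter.mp (hLsub h')).2
    · intro v hv
      rcases Finset.mem_insert.mp hv with h | h
      · subst h; exact Finset.mem_insert_of_mem hcA
      · rcases Finset.mem_insert.mp h with h' | h'
        · subst h'; exact Finset.mem_insert_self _ _
        · exact Finset.mem_insert_of_mem (hLA h')

/-- Absorb all stragglers in X, each into its own star using m-1 vertices of A'. -/
lemma absorb (hr : IsTournament r) (hm : 2 ≤ m) :
    ∀ (X A' : Finset (Fin N)), Disjoint X A' →
      (m - 1) * X.card + (2 * m - 4) ≤ A'.card →
    ∃ P C, C ⊆ A' ∧ C.card = (m - 1) * X.card ∧ GoodOn r m P (X ∪ C) := by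
  intro X
  induction X using Finset.induction_on with
  | empty =>
    intro A' _ _
    exact ⟨∅, ∅, Finset.empty_subset _, by simp, by simpa using (goodOn_empty (r := r) (m := m))⟩
  | @insert x X₀ hx ih =>
    intro A' hdisj hcard
    have hxA : x ∉ A' := Finset.disjoint_left.mp hdisj (Finset.mem_insert_self _ _)
    have hXcard : (insert x X₀).card = X₀.card + 1 := Finset.card_insert_of_notMem hx
    have hmul : (m-1) * (X₀.card + 1) = (m-1) * X₀.card + (m-1) := by ring
    rw [hXcard, hmul] at hcard
    have hA5 : 3 * m ≤ A'.card + 5 := by omega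
    obtain ⟨S, hSstar, hxS, hSsub⟩ := straggler hr hm hxA hA5
    have hScard : S.card = m := hSstar.1
    set C₁ : Finset (Fin N) := S.erase x with hC₁
    have hC₁sub : C₁ ⊆ A' := by
      intro a ha
      have h := Finset.mem_erase.mp ha
      rcases Finset.mem_insert.mp (hSsub h.2) with h' | h'
      · exact absurd h' h.1
      · exact h'
    have hC₁card : C₁.card = m - 1 := by rw [hC₁, Finset.card_erase_of_mem hxS, hScard]
    have hSeq : S = insert x C₁ := (Finset.insert_erase hxS).symm
    set A₂ : Finset (Fin N) := A' \ S with hA₂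
    have hA₂eq : A₂ = A' \ C₁ := by
      rw [hA₂]
      ext a
      simp only [Finset.mem_sdiff, hSeq, Finset.mem_insert]
      have : a ∈ A' → a ≠ x := fun h hh => hxA (hh ▸ h)
      tauto
    have hA₂card : A₂.card + (m - 1) = A'.card := by
      rw [hA₂eq, Finset.card_sdiff_of_subset hC₁sub, hC₁card]
      have : C₁.card ≤ A'.card := Finset.card_le_card hC₁sub
      omega
    have hdisj₂ : Disjoint X₀ A₂ := Disjoint.mono (Finset.subset_insert _ _)
      Finset.sdiff_subset hdisj
    have hcard₂ : (m - 1) * X₀.card + (2 * m - 4) ≤ A₂.card := by omega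
    obtain ⟨P', C', hC'sub, hC'card, hgood⟩ := ih A₂ hdisj₂ hcard₂
    have hC'A : C' ⊆ A' := hC'sub.trans Finset.sdiff_subset
    have hC'S : ∀ a ∈ C', a ∉ S := fun a ha => (Finset.mem_sdiff.mp (hC'sub ha)).2
    have hdisjC : Disjoint C₁ C' := Finset.disjoint_right.mpr
      (fun a ha h => hC'S a ha (Finset.erase_subset _ _ h))
    refine ⟨{S} ∪ P', C₁ ∪ C', Finset.union_subset hC₁sub hC'A, ?_, ?_⟩
    · rw [Finset.card_union_of_disjoint hdisjC, hC₁card, hC'card, hXcard, hmul]; omega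
    · have hdSU : Disjoint S (X₀ ∪ C') := by
        refine Finset.disjoint_left.mpr fun a haS haU => ?_
        rcases Finset.mem_union.mp haU with h | h
        · rcases Finset.mem_insert.mp (hSeq ▸ haS) with h' | h'
          · exact hx (h' ▸ h)
          · exact Finset.disjoint_left.mp hdisj (Finset.mem_insert_of_mem h) (hC₁sub h')
        · exact hC'S a h haS
      have hgU := (goodOn_singleton hSstar).union hgood hdSU
      apply hgU.congr
      ext a
      simp only [Finset.mem_union, Finset.mem_insert, hSeq]
      tauto

end Aux

theorem star_factor_upper_bound (m n : ℕ) (hm : 2 ≤ m)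
    (hn : 4 * m ^ 2 - 6 * m < n) (hdvd : m ∣ n)
    (r : Fin n → Fin n → Prop) (hr : IsTournament r) :
    HasStarFactor r m := by
  classical
  obtain ⟨p, rfl⟩ : ∃ p, m = p + 2 := ⟨m - 2, by omega⟩
  have hmdef : p + 2 = p + 2 := rfl
  obtain ⟨q, hq⟩ := hdvd
  -- basic arithmetic
  have epp : (p + 2) ^ 2 = p * p + 4 * p + 4 := by ring
  have e1 : (p + 2) * (4 * p + 2) = 4 * (p * p) + 10 * p + 4 := by ring
  have hn' : (p + 2) * (4 * p + 2) < n := by rw [e1, ]; rw [epp] at hn; omega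
  have hqlb : 4 * p + 3 ≤ q := by
    by_contra hcon
    push_neg at hcon
    have : (p+2) * q ≤ (p+2) * (4*p+2) := Nat.mul_le_mul_left _ (by omega)
    omega
  have e2 : (p + 2) * (4 * p + 3) = 4 * (p * p) + 11 * p + 6 := by ring
  have hnlb : 4 * (p * p) + 11 * p + 6 ≤ n := by
    have : (p+2) * (4*p+3) ≤ (p+2)*q := Nat.mul_le_mul_left _ hqlb
    omega
  have hnpos : 0 < n := by omega
  have huniv : (Finset.univ : Finset (Fin n)).Nonempty := by
    rw [← Finset.card_pos, Finset.card_univ, Fintype.card_fin]; omega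
  have hmodn : 2 * (n / 2) + n % 2 = n := by omega
  -- the big-degree vertex
  obtain ⟨v, _, hvdeg⟩ := maxdeg hr huniv (d := n / 2)
    (by rw [Finset.card_univ, Fintype.card_fin]; omega)
  set A₀ : Finset (Fin n) := Finset.univ.filter (fun u => r v u) with hA₀def
  have hvA₀ : v ∉ A₀ := fun h => not_self hr v (Finset.mem_filter.mp h).2
  set B₀ : Finset (Fin n) := Finset.univ \ insert v A₀ with hB₀def
  have hB₀card : B₀.card + (A₀.card + 1) = n := by
    have hins : (insert v A₀).card = A₀.card + 1 := Finset.card_insert_of_notMem hvA₀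
    have hle : (insert v A₀).card ≤ n := by
      have h := Finset.card_le_univ (insert v A₀)
      simpa using h
    have hsd : B₀.card = n - (insert v A₀).card := by
      rw [hB₀def, Finset.card_sdiff_of_subset (Finset.subset_univ _), Finset.card_univ, Fintype.card_fin]
    omega
  have ha₀ : n / 2 ≤ A₀.card := hvdeg
  -- choose j
  obtain ⟨c, rr, hcr, hrrlt⟩ : ∃ c rr, B₀.card + (p+2) = (p+2) * c + rr ∧ rr < (p+2) :=
    ⟨(B₀.card + (p+2)) / (p+2), (B₀.card + (p+2)) % (p+2), (Nat.div_add_mod _ _).symm, Nat.mod_lt _ (by omega)⟩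
  set j : ℕ := (p+2) - 1 - rr with hjdef
  have hcpos : 1 ≤ c := by
    rcases Nat.eq_zero_or_pos c with h | h
    · subst h; simp at hcr; omega
    · exact h
  obtain ⟨k, hk⟩ : ∃ k, c = k + 1 := ⟨c - 1, by omega⟩
  have hmk : (p+2) * c = (p+2) * k + (p+2) := by rw [hk]; ring
  have hBj : B₀.card + j = ((p+2) - 1) + k * (p+2) := by
    have : k * (p+2) = (p+2) * k := by ring
    omega
  have hjle : j ≤ A₀.card := by omega
  obtain ⟨J, hJsub, hJcard⟩ := Finset.exists_subset_card_eq hjle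
  set B : Finset (Fin n) := B₀ ∪ J with hBdef
  have hB₀A₀ : ∀ z ∈ B₀, z ∉ A₀ := by
    intro z hz
    have := Finset.mem_sdiff.mp hz
    exact fun h => this.2 (Finset.mem_insert_of_mem h)
  have hdisjB₀J : Disjoint B₀ J := Finset.disjoint_left.mpr
    (fun z hz h => hB₀A₀ z hz (hJsub h))
  have hBcard : B.card = ((p+2) - 1) + k * (p+2) := by
    rw [hBdef, Finset.card_union_of_disjoint hdisjB₀J, hJcard]
    omega
  set A : Finset (Fin n) := A₀ \ J with hAdef
  have hAcard : A.card + j = A₀.card := by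
    rw [hAdef, Finset.card_sdiff_of_subset hJsub, hJcard]; omega
  -- Phase 1
  obtain ⟨P₁, X, hXB, hXcard, hG₁⟩ := greedy hr (by omega) k B hBcard
  -- Phase 2
  have hdisjBA : Disjoint B A := by
    refine Finset.disjoint_left.mpr fun z hz h => ?_
    have hzA := Finset.mem_sdiff.mp h
    rcases Finset.mem_union.mp hz with h' | h'
    · exact hB₀A₀ z h' hzA.1
    · exact hzA.2 h'
  have hdisjXA : Disjoint X A := Disjoint.mono_left hXB hdisjBA
  have em1 : (p + 1) * (p + 1) = p * p + 2 * p + 1 := by ring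
  have habs : ((p+2) - 1) * X.card + (2 * (p+2) - 4) ≤ A.card := by
    rw [hXcard]
    have h1 : ((p+2) - 1) * ((p+2) - 1) = (p+1) * (p+1) := by norm_num
    rw [h1, em1]
    omega
  obtain ⟨P₂, C, hCA, hCcard, hG₂⟩ := absorb hr (by omega) X A hdisjXA habs
  -- Phase 3 counting
  set A₂ : Finset (Fin n) := A \ C with hA₂def
  have hA₂card : A₂.card + C.card = A.card := by
    rw [hA₂def, Finset.card_sdiff_of_subset hCA]
    have := Finset.card_le_card hCA
    omega
  have hCval : C.card = p * p + 2 * p + 1 := by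
    rw [hCcard, hXcard]
    have h1 : ((p+2) - 1) * ((p+2) - 1) = (p+1) * (p+1) := by norm_num
    rw [h1, em1]
  have hkq : k + 1 ≤ q := by
    by_contra hcon
    push_neg at hcon
    have h1 : (p+2) * q ≤ (p+2) * k := Nat.mul_le_mul_left _ (by omega)
    -- n = 1 + A.card + B.card  + ... derive contradiction
    have h2 : A.card + ((p+2) - 1 + k * (p+2)) + 1 = (p+2) * q := by
      have : k * (p+2) = (p+2) * k := by ring
      omega
    omega
  obtain ⟨s, hs⟩ : ∃ s, q = s + (k + 1) := ⟨q - (k+1), by omega⟩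
  have hms : A.card = (p+2) * s := by
    have e3 : (p+2) * (s + (k+1)) = (p+2) * s + (p+2) * k + (p+2) := by ring
    have h2 : A.card + ((p+2) - 1 + k * (p+2)) + 1 = (p+2) * q := by omega
    have hq2 : (p+2) * q = (p+2) * s + (p+2) * k + (p+2) := by rw [hs]; ring
    have ekk : k * (p+2) = (p+2) * k := by ring
    omega
  have hslb : p + 1 ≤ s := by
    have : (p+2) * (p + 1) ≤ (p+2) * s := by
      rw [← hms]
      have e4 : (p+2) * (p+1) = p*p + 3*p + 2 := by ring
      show (p+2) * (p+1) ≤ A.card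
      omega
    exact Nat.le_of_mul_le_mul_left this (by omega)
  obtain ⟨k', hk'⟩ : ∃ k', s = k' + (p + 1) := ⟨s - (p+1), by omega⟩
  have hA₂form : A₂.card = ((p+2) - 1) + k' * (p+2) := by
    have e5 : (p+2) * (k' + (p+1)) = k' * (p+2) + (p*p + 3*p + 2) := by ring
    have : A₂.card = (p+1) + k' * (p+2) := by
      rw [hk'] at hms
      omega
    simpa using this
  obtain ⟨P₃, F, hFA₂, hFcard, hG₃⟩ := greedy hr (by omega) k' A₂ hA₂form
  -- Final star
  have hA₂A₀ : A₂ ⊆ A₀ := (Finset.sdiff_subset).trans (Finset.sdiff_subset)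
  have hFA₀ : F ⊆ A₀ := hFA₂.trans hA₂A₀
  have hvF : v ∉ F := fun h => hvA₀ (hFA₀ h)
  set Sf : Finset (Fin n) := insert v F with hSfdef
  have hSfstar : IsMStar r (p+2) Sf := by
    refine ⟨?_, v, Finset.mem_insert_self _ _, ?_⟩
    · rw [hSfdef, Finset.card_insert_of_notMem hvF, hFcard]; omega
    · intro u hu huv
      rcases Finset.mem_insert.mp hu with h | h
      · exact absurd h huv
      · exact (Finset.mem_filter.mp (hFA₀ h)).2
  -- Assembly
  have hG₁₂ : GoodOn r (p+2) (P₁ ∪ P₂) (B ∪ C) := by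
    have hd : Disjoint (B \ X) (X ∪ C) := by
      rw [Finset.disjoint_union_right]
      exact ⟨Finset.sdiff_disjoint, Disjoint.mono Finset.sdiff_subset hCA hdisjBA⟩
    refine (hG₁.union hG₂ hd).congr ?_
    ext z
    simp only [Finset.mem_union, Finset.mem_sdiff]
    have : z ∈ X → z ∈ B := fun h => hXB h
    tauto
  have hvA₂ : v ∉ A₂ := fun h => hvA₀ (hA₂A₀ h)
  have hG₃₄ : GoodOn r (p+2) (P₃ ∪ {Sf}) (insert v A₂) := by
    have hd : Disjoint (A₂ \ F) Sf := by
      rw [hSfdef, Finset.disjoint_insert_right]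
      refine ⟨fun h => hvA₂ (Finset.mem_sdiff.mp h).1, Finset.sdiff_disjoint⟩
    refine (hG₃.union (goodOn_singleton hSfstar) hd).congr ?_
    ext z
    simp only [Finset.mem_union, Finset.mem_sdiff, hSfdef, Finset.mem_insert]
    have : z ∈ F → z ∈ A₂ := fun h => hFA₂ h
    tauto
  have hdisjBig : Disjoint (B ∪ C) (insert v A₂) := by
    refine Finset.disjoint_left.mpr fun z hz h => ?_
    have hzne : z ∈ A₀ ∨ z ∈ B₀ := by
      rcases Finset.mem_union.mp hz with h' | h'
      · rcases Finset.mem_union.mp h' with h'' | h''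
        · exact Or.inr h''
        · exact Or.inl (hJsub h'')
      · exact Or.inl ((Finset.sdiff_subset.trans (le_refl A₀) : A ⊆ A₀) (hCA h'))
    rcases Finset.mem_insert.mp h with h' | h'
    · subst h'
      rcases hzne with h'' | h''
      · exact hvA₀ h''
      · exact (Finset.mem_sdiff.mp h'').2 (Finset.mem_insert_self _ _)
    · -- z ∈ A₂ = (A₀ \ J) \ C
      have hz2 := Finset.mem_sdiff.mp h'
      have hz3 := Finset.mem_sdiff.mp hz2.1
      rcases Finset.mem_union.mp hz with h'' | h''
      · rcases Finset.mem_union.mp h'' with h3 | h3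
        · exact hB₀A₀ z h3 hz3.1
        · exact hz3.2 h3
      · exact hz2.2 h''
  have hGall := hG₁₂.union hG₃₄ hdisjBig
  have hcover : (B ∪ C) ∪ insert v A₂ = Finset.univ := by
    ext z
    simp only [Finset.mem_union, Finset.mem_insert, Finset.mem_univ, iff_true]
    by_cases hzv : z = v
    · tauto
    · by_cases hzA₀ : z ∈ A₀
      · by_cases hzJ : z ∈ J
        · exact Or.inl (Or.inl (Finset.mem_union_right _ hzJ))
        · by_cases hzC : z ∈ C
          · exact Or.inl (Or.inr hzC)
          · refine Or.inr (Or.inr ?_)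
            rw [hA₂def, hAdef]
            exact Finset.mem_sdiff.mpr ⟨Finset.mem_sdiff.mpr ⟨hzA₀, hzJ⟩, hzC⟩
      · refine Or.inl (Or.inl (Finset.mem_union_left _ ?_))
        rw [hB₀def]
        refine Finset.mem_sdiff.mpr ⟨Finset.mem_univ _, ?_⟩
        simp [hzv, hzA₀]
  obtain ⟨hP1, hP2, hP3⟩ := hGall.congr hcover
  exact ⟨_, hP1, hP2, hP3⟩
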